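/- Let 𝒜 be an abelian category and V an object such that Ext^1(V, V^{(I)}) = 0 for all sets I for which the coproduct V^{(I)} exists in 𝒜. Then: (1) if 𝒜 is Hom-finite, V is Ext^1-universal if and only if V^{⊥1} is a cogenerating subcategory of 𝒜; (2) if 𝒜 is (Ab.3), then the conjunction (Ext^1(V,A) is a set for every object A, and ⨿^1_I V = 0 for every set I) holds if and only if V^{⊥1} is a cogenerating subcategory of 𝒜; and when these equivalent conditions hold, V is Ext^1-universal. -/

import Mathlib

/-!
Common definitions for formalizing results of "Tilting preenvelopes and cotilting
precovers in general Abelian categories" (Parra–Saorín–Virili).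

Conventions:
* Full subcategories of an abelian category `C` are encoded as `Set C`.
* "Sets" (index sets of families, coproducts, …) are encoded as types in the universe `v`
  of the morphisms of `C`.
* `Ext¹(X,Y) = 0` is encoded via the splitting of all short exact sequences
  `0 → Y → E → X → 0` (equivalently, the vanishing of the Yoneda Ext group).
* Relative (`…In B`) notions encode the corresponding notion computed inside the
  full (abelian exact) subcategory determined by `B : Set C`; the ambient case is
  `B = Set.univ`.
* Coproducts are not assumed to exist: a coproduct of a family existing in the
  (sub)category is encoded by a cocone with the universal property (`IsCoproductIn`).
-/

open CategoryTheory CategoryTheory.Limits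

universe w v u

attribute [local instance] CategoryTheory.Abelian.hasFiniteBiproducts

namespace Paper

variable {C : Type u} [Category.{v} C] [Abelian C]

/-- `(i, p)` is a short exact sequence `0 ⟶ A ⟶ E ⟶ B ⟶ 0` in `C`. -/
def IsShortExact {A E B : C} (i : A ⟶ E) (p : E ⟶ B) : Prop :=
  ∃ hw : i ≫ p = 0, (ShortComplex.mk i p hw).ShortExact

/-- `Q`, together with the injections `ι`, is the coproduct of the family `f`
inside the full subcategory determined by `B`. -/
structure IsCoproductIn (B : Set C) {I : Type v} (f : I → C) (Q : C)
    (ι : ∀ i, f i ⟶ Q) : Prop where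
  mem : ∀ i, f i ∈ B
  memQ : Q ∈ B
  desc : ∀ Z ∈ B, ∀ g : (∀ i, f i ⟶ Z), ∃! h : Q ⟶ Z, ∀ i, ι i ≫ h = g i

/-- `Ext¹(X, Y) = 0`, computed in the full subcategory determined by `B`:
every short exact sequence `0 → Y → E → X → 0` with `E ∈ B` splits. -/
def Ext1ZeroIn (B : Set C) (X Y : C) : Prop :=
  ∀ E ∈ B, ∀ (i : Y ⟶ E) (p : E ⟶ X), IsShortExact i p → ∃ r : E ⟶ Y, i ≫ r = 𝟙 Y

/-- `Ext¹(X, Y) = 0` in the ambient abelian category. -/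
def Ext1Zero (X Y : C) : Prop := Ext1ZeroIn Set.univ X Y

/-- `V^{⊥₁}`, computed in (the full subcategory determined by) `B`. -/
def rightPerp (B : Set C) (V : C) : Set C := {A ∈ B | Ext1ZeroIn B V A}

/-- `^{⊥₁}T`, computed in `B`. -/
def leftPerpSet (B T : Set C) : Set C := {A ∈ B | ∀ X ∈ T, Ext1ZeroIn B A X}

/-- `T^{⊥₁}`, computed in `B`. -/
def rightPerpSet (B T : Set C) : Set C := {A ∈ B | ∀ X ∈ T, Ext1ZeroIn B X A}

/-- `Sub(X)` relative to `B`: objects of `B` admitting a monomorphism into an object of `X`. -/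
def subIn (B X : Set C) : Set C := {A ∈ B | ∃ T ∈ X, ∃ f : A ⟶ T, Mono f}

/-- `Quot(X)` relative to `B`: objects of `B` which are epimorphic images of objects of `X`. -/
def quotIn (B X : Set C) : Set C := {A ∈ B | ∃ T ∈ X, ∃ f : T ⟶ A, Epi f}

/-- `(T, F)` is a torsion pair in (the full subcategory determined by) `B`. -/
structure IsTorsionPairIn (B T F : Set C) : Prop where
  eqF : F = {A ∈ B | ∀ X ∈ T, ∀ f : X ⟶ A, f = 0}
  eqT : T = {A ∈ B | ∀ Y ∈ F, ∀ f : A ⟶ Y, f = 0}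
  seq : ∀ A ∈ B, ∃ (X Y : C) (i : X ⟶ A) (p : A ⟶ Y), X ∈ T ∧ Y ∈ F ∧ IsShortExact i p

/-- `T` is a torsion class in `B`. -/
def IsTorsionClassIn (B T : Set C) : Prop := ∃ F, IsTorsionPairIn B T F

/-- `F` is a torsion-free class in `B`. -/
def IsTorsionFreeClassIn (B F : Set C) : Prop := ∃ T, IsTorsionPairIn B T F

/-- `φ : M ⟶ X` is a `T`-preenvelope. -/
structure IsPreenvelope (T : Set C) {M X : C} (φ : M ⟶ X) : Prop where
  mem : X ∈ T
  fac : ∀ T' ∈ T, ∀ g : M ⟶ T', ∃ h : X ⟶ T', φ ≫ h = g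

/-- `φ` is a semi-special `T`-preenvelope (relative to `B`):
a `T`-preenvelope whose cokernel lies in `^{⊥₁}T` (computed in `B`). -/
def IsSemiSpecialPreenvelopeIn (B T : Set C) {M X : C} (φ : M ⟶ X) : Prop :=
  IsPreenvelope T φ ∧ cokernel φ ∈ leftPerpSet B T

/-- `φ` is a special `T`-preenvelope (relative to `B`). -/
def IsSpecialPreenvelopeIn (B T : Set C) {M X : C} (φ : M ⟶ X) : Prop :=
  Mono φ ∧ IsSemiSpecialPreenvelopeIn B T φ

/-- `T` is preenveloping in `B`. -/
def PreenvelopingIn (B T : Set C) : Prop :=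
  ∀ M ∈ B, ∃ (X : C) (φ : M ⟶ X), IsPreenvelope T φ

/-- `T` is semi-special preenveloping in `B`. -/
def SemiSpecialPreenvelopingIn (B T : Set C) : Prop :=
  ∀ M ∈ B, ∃ (X : C) (φ : M ⟶ X), IsSemiSpecialPreenvelopeIn B T φ

/-- `T` is special preenveloping in `B`. -/
def SpecialPreenvelopingIn (B T : Set C) : Prop :=
  ∀ M ∈ B, ∃ (X : C) (φ : M ⟶ X), IsSpecialPreenvelopeIn B T φ

/-- `φ : X ⟶ M` is a `T`-precover. -/
structure IsPrecover (T : Set C) {X M : C} (φ : X ⟶ M) : Prop where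
  mem : X ∈ T
  fac : ∀ T' ∈ T, ∀ g : T' ⟶ M, ∃ h : T' ⟶ X, h ≫ φ = g

/-- `φ` is a semi-special `T`-precover (relative to `B`):
a `T`-precover whose kernel lies in `T^{⊥₁}` (computed in `B`). -/
def IsSemiSpecialPrecoverIn (B T : Set C) {X M : C} (φ : X ⟶ M) : Prop :=
  IsPrecover T φ ∧ kernel φ ∈ rightPerpSet B T

/-- `T` is precovering in `B`. -/
def PrecoveringIn (B T : Set C) : Prop :=
  ∀ M ∈ B, ∃ (X : C) (φ : X ⟶ M), IsPrecover T φ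

/-- `T` is semi-special precovering in `B`. -/
def SemiSpecialPrecoveringIn (B T : Set C) : Prop :=
  ∀ M ∈ B, ∃ (X : C) (φ : X ⟶ M), IsSemiSpecialPrecoverIn B T φ

/-- `Add(V)` relative to `B`: direct summands of coproducts (existing in `B`)
of copies of `V`. -/
def addIn (B : Set C) (V : C) : Set C :=
  {A ∈ B | ∃ (I : Type v) (Q : C) (ι : ∀ _ : I, V ⟶ Q),
     IsCoproductIn B (fun _ : I => V) Q ι ∧ ∃ (s : A ⟶ Q) (r : Q ⟶ A), s ≫ r = 𝟙 A}

/-- `Gen(V)` relative to `B`: quotients of objects of `Add(V)`. -/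
def genIn (B : Set C) (V : C) : Set C :=
  {A ∈ B | ∃ X ∈ addIn B V, ∃ p : X ⟶ A, Epi p}

/-- `Pres(V)` relative to `B`: cokernels of morphisms between objects of `Add(V)`. -/
def presIn (B : Set C) (V : C) : Set C :=
  {A ∈ B | ∃ X ∈ addIn B V, ∃ Y ∈ addIn B V,
     ∃ (f : X ⟶ Y) (c : Y ⟶ A) (hw : f ≫ c = 0), Epi c ∧ (ShortComplex.mk f c hw).Exact}

/-- `Ḡen(V) = Sub(Gen(V))` relative to `B`. -/
def barGenIn (B : Set C) (V : C) : Set C := subIn B (genIn B V)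

/-- The class `X` is cogenerating in `B`. -/
def CogeneratingIn (B X : Set C) : Prop := ∀ A ∈ B, ∃ T ∈ X, ∃ f : A ⟶ T, Mono f

/-- The class `X` is generating in `B`. -/
def GeneratingIn (B X : Set C) : Prop := ∀ A ∈ B, ∃ T ∈ X, ∃ f : T ⟶ A, Epi f

/-- `V` is a quasi-tilting object of (the full subcategory determined by) `B`:
`Gen(V)` is a torsion class and `Gen(V) = Pres(V) = Ḡen(V) ∩ V^{⊥₁}`. -/
def IsQuasiTiltingIn (B : Set C) (V : C) : Prop :=
  V ∈ B ∧ IsTorsionClassIn B (genIn B V) ∧ genIn B V = presIn B V ∧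
    genIn B V = barGenIn B V ∩ rightPerp B V

/-- `V` is a tilting object of `B`: quasi-tilting with `Gen(V)` cogenerating. -/
def IsTiltingIn (B : Set C) (V : C) : Prop :=
  IsQuasiTiltingIn B V ∧ CogeneratingIn B (genIn B V)

/-- `G` is an epi-generator of `B`: every object of `B` is an epimorphic image of a
coproduct (existing in `B`) of copies of `G`. -/
def IsEpiGeneratorIn (B : Set C) (G : C) : Prop :=
  G ∈ B ∧ ∀ A ∈ B, ∃ (I : Type v) (Q : C) (ι : ∀ _ : I, G ⟶ Q),
    IsCoproductIn B (fun _ : I => G) Q ι ∧ ∃ p : Q ⟶ A, Epi p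

/-- `0 → A —u→ X → V^{(J)} → 0` is a universal extension of `V` by `A` (relative to `B`):
the right end of the sequence is a nonempty coproduct of copies of `V` existing in `B`,
and the induced map `Ext¹(V,A) → Ext¹(V,X)` is zero (encoded: for every extension
`0 → A —i→ E → V → 0` with `E ∈ B`, its pushout along `u` splits, i.e. `u` extends
along `i`). -/
def IsUniversalExtensionIn (B : Set C) (V A X : C) (u : A ⟶ X) : Prop :=
  A ∈ B ∧ X ∈ B ∧
  (∃ (J : Type v) (_ : Nonempty J) (P : C) (κ : ∀ _ : J, V ⟶ P) (p : X ⟶ P),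
     IsCoproductIn B (fun _ : J => V) P κ ∧ IsShortExact u p) ∧
  (∀ E ∈ B, ∀ (i : A ⟶ E) (q : E ⟶ V), IsShortExact i q → ∃ ψ : E ⟶ X, i ≫ ψ = u)

/-- `V` is `Ext¹`-universal in `B`: universal extensions of `V` by every object exist. -/
def IsExt1UniversalIn (B : Set C) (V : C) : Prop :=
  ∀ A ∈ B, ∃ (X : C) (u : A ⟶ X), IsUniversalExtensionIn B V A X u

/-- `(X, Y)` is a cotorsion pair in (the full subcategory determined by) `B`. -/
def IsCotorsionPairIn (B X Y : Set C) : Prop :=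
  Y = {A ∈ B | ∀ Z ∈ X, Ext1ZeroIn B Z A} ∧
  X = {A ∈ B | ∀ Z ∈ Y, Ext1ZeroIn B A Z}

/-- The pair `(X, Y)` is right complete in `B`: every `A ∈ B` admits a short exact
sequence `0 → A → Y' → X' → 0` with `Y' ∈ Y`, `X' ∈ X`. -/
def RightCompleteIn (B X Y : Set C) : Prop :=
  ∀ A ∈ B, ∃ (Y' X' : C) (i : A ⟶ Y') (p : Y' ⟶ X'), Y' ∈ Y ∧ X' ∈ X ∧ IsShortExact i p

/-- The pair `(X, Y)` is left complete in `B`: every `A ∈ B` admits a short exact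
sequence `0 → Y' → X' → A → 0` with `Y' ∈ Y`, `X' ∈ X`. -/
def LeftCompleteIn (B X Y : Set C) : Prop :=
  ∀ A ∈ B, ∃ (Y' X' : C) (i : Y' ⟶ X') (p : X' ⟶ A), Y' ∈ Y ∧ X' ∈ X ∧ IsShortExact i p

/-- The full subcategory determined by `B` is reflective in `C`:
the (fully faithful) inclusion functor has a left adjoint. -/
def IsReflectiveSub (B : Set C) : Prop :=
  (ObjectProperty.ι (· ∈ B : ObjectProperty C)).IsRightAdjoint

/-- The full subcategory determined by `B` is coreflective in `C`:
the inclusion functor has a right adjoint. -/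
def IsCoreflectiveSub (B : Set C) : Prop :=
  (ObjectProperty.ι (· ∈ B : ObjectProperty C)).IsLeftAdjoint

/-- `Ext²(V, A) = 0` (Yoneda `Ext²`): every `2`-fold extension
`0 → A —g→ X₁ —f→ X₀ —p→ V → 0` represents the trivial class, i.e. (by the standard
long-exact-sequence criterion) the extension `0 → A → X₁ → im f → 0` extends to an
extension of `X₀` by `A`. -/
def Ext2Zero (V A : C) : Prop :=
  ∀ (X1 X0 : C) (g : A ⟶ X1) (f : X1 ⟶ X0) (p : X0 ⟶ V)
    (w1 : g ≫ f = 0) (w2 : f ≫ p = 0),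
    Mono g → Epi p → (ShortComplex.mk g f w1).Exact → (ShortComplex.mk f p w2).Exact →
    ∃ (Y : C) (a : A ⟶ Y) (b : Y ⟶ X0), IsShortExact a b ∧
      ∃ φ : X1 ⟶ Y, g ≫ φ = a ∧ φ ≫ b = f

/-- `V` has projective dimension at most `1`: `Ext²(V, A) = 0` for every `A`. -/
def ProjDimLE1 (V : C) : Prop := ∀ A : C, Ext2Zero V A

/-- The "elements" of the (possibly large) Yoneda `Ext¹(X, Y)`: short exact sequences
`0 → Y → E → X → 0`. -/
def ExtElem (X Y : C) : Type (max u v) :=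
  Σ' (E : C) (i : Y ⟶ E) (p : E ⟶ X), IsShortExact i p

/-- Yoneda equivalence of extensions. -/
def extRel (X Y : C) : ExtElem X Y → ExtElem X Y → Prop :=
  fun e₁ e₂ => ∃ φ : e₁.1 ⟶ e₂.1, e₁.2.1 ≫ φ = e₂.2.1 ∧ φ ≫ e₂.2.2.1 = e₁.2.2.1

/-- The (possibly large) Yoneda `Ext¹(X, Y)`, as the quotient of the collection
of extensions by Yoneda equivalence. -/
def ExtClass (X Y : C) : Type (max u v) := Quot (extRel X Y)

/-- `Ext¹(A, B)` is a finitely generated (right) `End(A)`-module: there are `n : ℕ` and a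
short exact sequence `0 → B → X → A^n → 0` whose connecting map
`Hom(A, A^n) → Ext¹(A, B)` is surjective, i.e. every extension of `A` by `B` is a pullback
of the fixed one along some `h : A ⟶ A^n`. -/
def Ext1FGEnd (A B : C) : Prop :=
  ∃ (n : ℕ) (X : C) (u : B ⟶ X) (p : X ⟶ ⨁ (fun _ : Fin n => A)),
    IsShortExact u p ∧
    ∀ (E : C) (i : B ⟶ E) (q : E ⟶ A), IsShortExact i q →
      ∃ (h : A ⟶ ⨁ (fun _ : Fin n => A)) (φ : E ⟶ X), i ≫ φ = u ∧ φ ≫ p = q ≫ h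

/-- `∐¹_I f = 0`: for every `I`-indexed family of short exact sequences
`0 → Xᵢ → Yᵢ → fᵢ → 0`, the induced morphism `∐ Xᵢ → ∐ Yᵢ` between (existing)
coproducts is a monomorphism. -/
def CoprodDerivedZeroFam {I : Type v} (f : I → C) : Prop :=
  ∀ (X Y : I → C) (u : ∀ i, X i ⟶ Y i) (p : ∀ i, Y i ⟶ f i),
    (∀ i, IsShortExact (u i) (p i)) →
    ∀ (QX QY : C) (ιX : ∀ i, X i ⟶ QX) (ιY : ∀ i, Y i ⟶ QY) (uu : QX ⟶ QY),
      IsCoproductIn Set.univ X QX ιX → IsCoproductIn Set.univ Y QY ιY →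
      (∀ i, ιX i ≫ uu = u i ≫ ιY i) → Mono uu

/-- `∐¹_I V = 0` for the constant family at `V`. -/
def CoprodDerivedZero (I : Type v) (V : C) : Prop :=
  CoprodDerivedZeroFam (fun _ : I => V)

/-- Witness that the category `D` is `Hom`-finite: a commutative ring `R` together with an
`R`-linear structure on `D` for which all `Hom`-modules are finitely generated. -/
structure HomFiniteStruct (D : Type u) [Category.{v} D] [Preadditive D] :
    Type (max u (v + 1)) where
  R : Type v
  [commRing : CommRing R]
  [linear : CategoryTheory.Linear R D]
  homFinite : ∀ A B : D, Module.Finite R (A ⟶ B)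

/-- The category `D` is `Hom`-finite. -/
def HomFinite (D : Type u) [Category.{v} D] [Preadditive D] : Prop :=
  Nonempty (HomFiniteStruct D)

/-- `Q`, with injections `ι`, is a coproduct of the family `f` in an arbitrary category. -/
def IsCoproductCocone {D : Type u} [Category.{v} D] {I : Type w} (f : I → D) (Q : D)
    (ι : ∀ i, f i ⟶ Q) : Prop :=
  ∀ (Z : D) (g : ∀ i, f i ⟶ Z), ∃! h : Q ⟶ Z, ∀ i, ι i ≫ h = g i

/-- The category `D` satisfies (Ab.4): it has all (small) coproducts, and coproducts
of monomorphisms are monomorphisms (for abelian categories, the latter is equivalent to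
the exactness of coproducts). -/
def Ab4Type (D : Type u) [Category.{v} D] : Prop :=
  HasCoproducts.{v} D ∧
  ∀ (I : Type v) (X Y : I → D) (u : ∀ i, X i ⟶ Y i), (∀ i, Mono (u i)) →
    ∀ (QX QY : D) (ιX : ∀ i, X i ⟶ QX) (ιY : ∀ i, Y i ⟶ QY) (uu : QX ⟶ QY),
      IsCoproductCocone X QX ιX → IsCoproductCocone Y QY ιY →
      (∀ i, ιX i ≫ uu = u i ≫ ιY i) → Mono uu

/-- The category `D` satisfies (Ab.5): it has all (small) coproducts and directed
(filtered) colimits of monomorphisms are monomorphisms (for abelian categories the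
latter is equivalent to the exactness of directed colimits). -/
def Ab5Type (D : Type u) [Category.{v} D] : Prop :=
  HasCoproducts.{v} D ∧
  ∀ (J : Type v) [SmallCategory J] [IsFiltered J] (F G : J ⥤ D) (α : F ⟶ G),
    (∀ j, Mono (α.app j)) →
    ∀ (cF : Cocone F) (cG : Cocone G), IsColimit cF → IsColimit cG →
      ∀ m : cF.pt ⟶ cG.pt, (∀ j, cF.ι.app j ≫ m = α.app j ≫ cG.ι.app j) → Mono m

/-- A ring `S` is left coherent: every finitely generated left ideal is finitely
presented as a left `S`-module. -/
def LeftCoherentRing (S : Type u) [Ring S] : Prop :=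
  ∀ J : Submodule S S, J.FG → Module.FinitePresentation S J

/-- A ring `S` is right coherent: every finitely generated right ideal (i.e. finitely
generated left ideal of `Sᵐᵒᵖ`) is finitely presented as a right `S`-module. -/
def RightCoherentRing (S : Type u) [Ring S] : Prop :=
  ∀ J : Submodule Sᵐᵒᵖ Sᵐᵒᵖ, J.FG → Module.FinitePresentation Sᵐᵒᵖ J

end Paper

/-!
STATEMENT 14 (Proposition `prop.derivcoprod=0-implies-projdim=1`).
-/

namespace Stmt14

open Paper CategoryTheory CategoryTheory.Limits

variable {C : Type u} [Category.{v} C] [Abelian C]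

section SES
variable {A E B : C} {i : A ⟶ E} {p : E ⟶ B}
lemma se_w (h : IsShortExact i p) : i ≫ p = 0 := h.choose
lemma se_shortExact (h : IsShortExact i p) :
    (ShortComplex.mk i p (se_w h)).ShortExact := h.choose_spec
lemma se_mono (h : IsShortExact i p) : Mono i := (se_shortExact h).mono_f
lemma se_epi (h : IsShortExact i p) : Epi p := (se_shortExact h).epi_g
lemma se_lift (h : IsShortExact i p) {T : C} (g : T ⟶ E) (hg : g ≫ p = 0) :
    ∃ l : T ⟶ A, l ≫ i = g := by
  obtain ⟨l, hl⟩ := KernelFork.IsLimit.lift' (se_shortExact h).fIsKernel g hg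
  exact ⟨l, hl⟩
lemma se_desc (h : IsShortExact i p) {T : C} (g : E ⟶ T) (hg : i ≫ g = 0) :
    ∃ d : B ⟶ T, p ≫ d = g := by
  obtain ⟨d, hd⟩ := CokernelCofork.IsColimit.desc' (se_shortExact h).gIsCokernel g hg
  exact ⟨d, hd⟩
lemma se_mk (w : i ≫ p = 0) (hm : Mono i) (he : Epi p)
    (hk : ∀ {T : C} (g : T ⟶ E), g ≫ p = 0 → ∃ l : T ⟶ A, l ≫ i = g) :
    IsShortExact i p := by
  haveI := hm
  refine ⟨w, ShortComplex.ShortExact.mk' ?_ hm he⟩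
  exact ShortComplex.exact_of_f_is_kernel (ShortComplex.mk i p w)
    (KernelFork.IsLimit.ofι' i w (fun g hg => ⟨(hk g hg).choose, (hk g hg).choose_spec⟩))
lemma se_mk' (w : i ≫ p = 0) (hm : Mono i) (he : Epi p)
    (hc : ∀ {T : C} (g : E ⟶ T), i ≫ g = 0 → ∃ d : B ⟶ T, p ≫ d = g) :
    IsShortExact i p := by
  haveI := he
  refine ⟨w, ShortComplex.ShortExact.mk' ?_ hm he⟩
  exact ShortComplex.exact_of_g_is_cokernel (ShortComplex.mk i p w)
    (CokernelCofork.IsColimit.ofπ' p w (fun g hg => ⟨(hc g hg).choose, (hc g hg).choose_spec⟩))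
end SES


/-- Pushout of a short exact sequence `0 → A → E → Z → 0` along `f : A → B`. -/
lemma pushout_ses {A E Z B : C} {i : A ⟶ E} {p : E ⟶ Z} (hse : IsShortExact i p) (f : A ⟶ B) :
    ∃ (D : C) (inB : B ⟶ D) (c : E ⟶ D) (p' : D ⟶ Z),
      i ≫ c = f ≫ inB ∧ c ≫ p' = p ∧ IsShortExact inB p' ∧ (Epi f → Epi c) := by
  haveI := se_mono hse
  haveI := se_epi hse
  have wip := se_w hse
  set l : A ⟶ B ⊞ E := biprod.lift f (-i) with hl
  haveI hlm : Mono l := (Preadditive.mono_iff_cancel_zero _).2 (by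
    intro T g hg
    have h2 : g ≫ l ≫ biprod.snd = 0 := by rw [reassoc_of% hg, zero_comp]
    simp only [hl, biprod.lift_snd, Preadditive.comp_neg, neg_eq_zero] at h2
    exact zero_of_comp_mono i h2)
  set π := cokernel.π l with hπ
  set inB : B ⟶ cokernel l := biprod.inl ≫ π with hinB
  set c : E ⟶ cokernel l := biprod.inr ≫ π with hc
  have hcomm : i ≫ c = f ≫ inB := by
    have hcond : l ≫ π = 0 := cokernel.condition l
    simp only [hl, biprod.lift_eq, Preadditive.add_comp, Preadditive.neg_comp,
      Category.assoc, add_neg_eq_zero] at hcond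
    exact hcond.symm
  have hzd : l ≫ biprod.desc (0 : B ⟶ Z) p = 0 := by
    rw [hl, biprod.lift_desc]; simp [wip]
  set p' : cokernel l ⟶ Z := cokernel.desc l (biprod.desc 0 p) hzd with hp'
  have hcp : c ≫ p' = p := by rw [hc, hp', Category.assoc, cokernel.π_desc, biprod.inr_desc]
  have hBp' : inB ≫ p' = 0 := by rw [hinB, hp', Category.assoc, cokernel.π_desc, biprod.inl_desc]
  haveI hmono : Mono inB := (Preadditive.mono_iff_cancel_zero _).2 (by
    intro T g hg
    have h0 : (g ≫ biprod.inl) ≫ cokernel.π l = 0 := by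
      rw [Category.assoc]; exact hg
    have hw : Abelian.monoLift l (g ≫ biprod.inl) h0 ≫ l = g ≫ biprod.inl :=
      Abelian.monoLift_comp l _ h0
    have h2 : Abelian.monoLift l (g ≫ biprod.inl) h0 ≫ l ≫ biprod.snd = 0 := by
      rw [← Category.assoc, hw, Category.assoc, biprod.inl_snd, comp_zero]
    simp only [hl, biprod.lift_snd, Preadditive.comp_neg, neg_eq_zero] at h2
    have hw0 : Abelian.monoLift l (g ≫ biprod.inl) h0 = 0 := zero_of_comp_mono i h2
    have hg0 : g ≫ (biprod.inl : B ⟶ B ⊞ E) = 0 := by rw [← hw, hw0, zero_comp]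
    have := hg0 =≫ biprod.fst
    simpa using this)
  haveI hcepi : Epi (c ≫ p') := by rw [hcp]; infer_instance
  haveI hepi : Epi p' := epi_of_epi c p'
  have hdesc : ∀ {T : C} (t : cokernel l ⟶ T), inB ≫ t = 0 → ∃ d : Z ⟶ T, p' ≫ d = t := by
    intro T t ht
    have h0 : i ≫ c ≫ t = 0 := by rw [reassoc_of% hcomm, ht, comp_zero]
    obtain ⟨s, hs⟩ := se_desc hse (c ≫ t) h0
    refine ⟨s, ?_⟩
    rw [← cancel_epi π]
    apply biprod.hom_ext'
    · have h1 : inB ≫ p' ≫ s = inB ≫ t := by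
        rw [ht, ← Category.assoc, hBp', zero_comp]
      simpa only [hinB, Category.assoc] using h1
    · have h2 : c ≫ p' ≫ s = c ≫ t := by rw [← Category.assoc, hcp, hs]
      simpa only [hc, Category.assoc] using h2
  refine ⟨cokernel l, inB, c, p', hcomm, hcp, se_mk' hBp' hmono hepi hdesc, ?_⟩
  intro hf
  refine (Preadditive.epi_iff_cancel_zero _).2 (fun T t ht => ?_)
  have h1 : f ≫ inB ≫ t = 0 := by rw [← Category.assoc, ← hcomm, Category.assoc, ht, comp_zero]
  haveI := hf
  have h2 : inB ≫ t = 0 := zero_of_epi_comp f h1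
  have h3 : π ≫ t = 0 := by
    apply biprod.hom_ext'
    · simpa only [hinB, Category.assoc, comp_zero] using h2
    · simpa only [hc, Category.assoc, comp_zero] using ht
  rwa [← cancel_epi π, comp_zero]

/-- Pullback of a short exact sequence `0 → A → E → Z → 0` along `g : Y → Z`. -/
lemma pullback_ses {A E Z Y : C} {i : A ⟶ E} {p : E ⟶ Z} (hse : IsShortExact i p) (g : Y ⟶ Z) :
    ∃ (W : C) (inA : A ⟶ W) (prE : W ⟶ E) (prY : W ⟶ Y),
      inA ≫ prE = i ∧ inA ≫ prY = 0 ∧ prE ≫ p = prY ≫ g ∧ IsShortExact inA prY ∧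
      (∀ {T : C} (h : T ⟶ E) (k : T ⟶ Y), h ≫ p = k ≫ g →
        ∃ ψ : T ⟶ W, ψ ≫ prE = h ∧ ψ ≫ prY = k) ∧
      (∀ {T : C} (w₁ w₂ : T ⟶ W), w₁ ≫ prE = w₂ ≫ prE → w₁ ≫ prY = w₂ ≫ prY → w₁ = w₂) := by
  haveI := se_mono hse
  haveI := se_epi hse
  have wip := se_w hse
  set d : E ⊞ Y ⟶ Z := biprod.desc p (-g) with hd
  haveI hde : Epi d := (Preadditive.epi_iff_cancel_zero _).2 (by
    intro T t ht
    have h2 : biprod.inl ≫ d ≫ t = 0 := by rw [ht, comp_zero]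
    simp only [hd, ← Category.assoc, biprod.inl_desc] at h2
    exact zero_of_epi_comp p h2)
  set μ := kernel.ι d with hμ
  set prE : kernel d ⟶ E := μ ≫ biprod.fst with hprE
  set prY : kernel d ⟶ Y := μ ≫ biprod.snd with hprY
  have hcomm : prE ≫ p = prY ≫ g := by
    have hcond : μ ≫ d = 0 := kernel.condition d
    simp only [hd, biprod.desc_eq, Preadditive.comp_add, Preadditive.comp_neg,
      ← Category.assoc, add_neg_eq_zero] at hcond
    exact hcond
  have hlz : biprod.lift i (0 : A ⟶ Y) ≫ d = 0 := by
    rw [hd, biprod.lift_desc]; simp [wip]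
  set inA : A ⟶ kernel d := kernel.lift d (biprod.lift i 0) hlz with hinA
  have hiE : inA ≫ prE = i := by
    rw [hinA, hprE, ← Category.assoc, kernel.lift_ι, biprod.lift_fst]
  have hiY : inA ≫ prY = 0 := by
    rw [hinA, hprY, ← Category.assoc, kernel.lift_ι, biprod.lift_snd]
  haveI hmono : Mono inA := by
    refine (Preadditive.mono_iff_cancel_zero _).2 (fun T t ht => ?_)
    have : t ≫ inA ≫ prE = 0 := by rw [reassoc_of% ht, zero_comp]
    rw [hiE] at this
    exact zero_of_comp_mono i this
  haveI hepi : Epi prY := (Preadditive.epi_iff_cancel_zero _).2 (by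
    intro T t ht
    have h0 : kernel.ι d ≫ biprod.snd ≫ t = 0 := by
      simpa only [hprY, hμ, Category.assoc] using ht
    have hfac : d ≫ Abelian.epiDesc d (biprod.snd ≫ t) h0 = biprod.snd ≫ t :=
      Abelian.comp_epiDesc d _ h0
    have h1 : p ≫ Abelian.epiDesc d (biprod.snd ≫ t) h0 = 0 := by
      have := biprod.inl ≫= hfac
      simpa only [hd, ← Category.assoc, biprod.inl_desc, biprod.inl_snd, zero_comp] using this
    have h2 : Abelian.epiDesc d (biprod.snd ≫ t) h0 = 0 := zero_of_epi_comp p h1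
    have h3 : (biprod.snd : E ⊞ Y ⟶ Y) ≫ t = 0 := by rw [← hfac, h2, comp_zero]
    have := biprod.inr ≫= h3
    simpa using this)
  have hlift : ∀ {T : C} (h : T ⟶ E) (k : T ⟶ Y), h ≫ p = k ≫ g →
      ∃ ψ : T ⟶ kernel d, ψ ≫ prE = h ∧ ψ ≫ prY = k := by
    intro T h k hhk
    have hz : biprod.lift h k ≫ d = 0 := by
      rw [hd, biprod.lift_desc]; simp [hhk]
    refine ⟨kernel.lift d (biprod.lift h k) hz, ?_, ?_⟩
    · rw [hprE, ← Category.assoc, kernel.lift_ι, biprod.lift_fst]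
    · rw [hprY, ← Category.assoc, kernel.lift_ι, biprod.lift_snd]
  have hjm : ∀ {T : C} (w₁ w₂ : T ⟶ kernel d), w₁ ≫ prE = w₂ ≫ prE →
      w₁ ≫ prY = w₂ ≫ prY → w₁ = w₂ := by
    intro T w₁ w₂ h1 h2
    rw [← cancel_mono μ]
    apply biprod.hom_ext
    · simpa only [hprE, Category.assoc] using h1
    · simpa only [hprY, Category.assoc] using h2
  have hker : ∀ {T : C} (t : T ⟶ kernel d), t ≫ prY = 0 → ∃ v : T ⟶ A, v ≫ inA = t := by
    intro T t ht
    have h2 : (t ≫ prE) ≫ p = 0 := by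
      rw [Category.assoc, hcomm, ← Category.assoc, ht, zero_comp]
    obtain ⟨v, hv⟩ := se_lift hse (t ≫ prE) h2
    refine ⟨v, hjm _ _ ?_ ?_⟩
    · rw [Category.assoc, hiE, hv]
    · rw [Category.assoc, hiY, comp_zero, ht]
  exact ⟨kernel d, inA, prE, prY, hiE, hiY, hcomm, se_mk hiY hmono hepi hker, hlift, hjm⟩


/-- Lifting along a short exact sequence into an `Ext¹`-orthogonal object. -/
lemma ext_lift_of_ext1zero {V T X Y : C} (hT : Ext1Zero V T)
    {u : X ⟶ Y} {p : Y ⟶ V} (hse : IsShortExact u p) (t : X ⟶ T) :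
    ∃ s : Y ⟶ T, u ≫ s = t := by
  obtain ⟨D, inT, c, p', hcomm, hcp, hse', -⟩ := pushout_ses hse t
  obtain ⟨r, hr⟩ := hT D trivial inT p' hse'
  exact ⟨c ≫ r, by rw [← Category.assoc, hcomm, Category.assoc, hr, Category.comp_id]⟩

/-- Key lemma: the middle term of a universal extension is Ext¹-orthogonal. -/
lemma ext1zero_of_universal {V A X P : C} {u : A ⟶ X} {π : X ⟶ P}
    (hse1 : IsShortExact u π) (hP : Ext1Zero V P)
    (hU : ∀ (E : C) (i : A ⟶ E) (q : E ⟶ V), IsShortExact i q → ∃ ψ : E ⟶ X, i ≫ ψ = u) :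
    Ext1Zero V X := by
  intro E _ j q hse2
  haveI := se_mono hse1; haveI := se_epi hse1
  haveI := se_mono hse2; haveI := se_epi hse2
  obtain ⟨D, inP, c, p', hcomm, hcp, hse3, hcepi⟩ := pushout_ses hse2 π
  haveI hc : Epi c := hcepi (se_epi hse1)
  obtain ⟨r1, hr1⟩ := hP D trivial inP p' hse3
  haveI : IsSplitEpi r1 := IsSplitEpi.mk' ⟨inP, hr1⟩
  set ρ : E ⟶ P := c ≫ r1 with hρ
  have hjρ : j ≫ ρ = π := by
    rw [hρ, ← Category.assoc, hcomm, Category.assoc, hr1, Category.comp_id]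
  haveI hρepi : Epi ρ := epi_comp _ _
  have haz : (u ≫ j) ≫ ρ = 0 := by rw [Category.assoc, hjρ, se_w hse1]
  set a : A ⟶ kernel ρ := kernel.lift ρ (u ≫ j) haz with ha
  have haι : a ≫ kernel.ι ρ = u ≫ j := kernel.lift_ι ρ (u ≫ j) haz
  haveI hujm : Mono (u ≫ j) := mono_comp u j
  haveI hamono : Mono a := by
    refine (Preadditive.mono_iff_cancel_zero _).2 (fun T t ht => ?_)
    have : t ≫ a ≫ kernel.ι ρ = 0 := by rw [reassoc_of% ht, zero_comp]
    rw [haι] at this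
    exact zero_of_comp_mono _ this
  set b : kernel ρ ⟶ V := kernel.ι ρ ≫ q with hb
  have hab : a ≫ b = 0 := by
    rw [hb, ← Category.assoc, haι, Category.assoc, se_w hse2, comp_zero]
  have hker : ∀ {T : C} (t : T ⟶ kernel ρ), t ≫ b = 0 → ∃ v : T ⟶ A, v ≫ a = t := by
    intro T t ht
    have ht' : (t ≫ kernel.ι ρ) ≫ q = 0 := by
      rw [Category.assoc, ← hb]; exact ht
    obtain ⟨s, hs⟩ := se_lift hse2 (t ≫ kernel.ι ρ) ht'
    have hsπ : s ≫ π = 0 := by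
      rw [← hjρ, ← Category.assoc, hs, Category.assoc, kernel.condition, comp_zero]
    obtain ⟨w, hw⟩ := se_lift hse1 s hsπ
    refine ⟨w, ?_⟩
    rw [← cancel_mono (kernel.ι ρ), Category.assoc, haι, ← Category.assoc, hw, hs]
  haveI hbepi : Epi b := (Preadditive.epi_iff_cancel_zero _).2 (by
    intro T t ht
    have h0 : kernel.ι ρ ≫ q ≫ t = 0 := by
      rw [← Category.assoc, ← hb]; exact ht
    have hfac := Abelian.comp_epiDesc ρ (q ≫ t) h0
    have h1 : π ≫ Abelian.epiDesc ρ (q ≫ t) h0 = 0 := by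
      rw [← hjρ, Category.assoc, hfac, ← Category.assoc, se_w hse2, zero_comp]
    have h2 : Abelian.epiDesc ρ (q ≫ t) h0 = 0 := zero_of_epi_comp π h1
    have h3 : q ≫ t = 0 := by rw [← hfac, h2, comp_zero]
    exact zero_of_epi_comp q h3)
  have hseK : IsShortExact a b := se_mk hab hamono hbepi hker
  obtain ⟨ψ, hψ⟩ := hU (kernel ρ) a b hseK
  set dd : X ⊞ kernel ρ ⟶ E := biprod.desc j (kernel.ι ρ) with hdd
  haveI hddepi : Epi dd := (Preadditive.epi_iff_cancel_zero _).2 (by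
    intro T t ht
    have hιt : kernel.ι ρ ≫ t = 0 := by
      have := biprod.inr ≫= ht
      simpa [hdd] using this
    have hjt : j ≫ t = 0 := by
      have := biprod.inl ≫= ht
      simpa [hdd] using this
    have hfac := Abelian.comp_epiDesc ρ t hιt
    have h1 : π ≫ Abelian.epiDesc ρ t hιt = 0 := by
      rw [← hjρ, Category.assoc, hfac]; exact hjt
    have h2 : Abelian.epiDesc ρ t hιt = 0 := zero_of_epi_comp π h1
    rw [← hfac, h2, comp_zero])
  set κ : A ⟶ X ⊞ kernel ρ := biprod.lift u (-a) with hκ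
  have hκd : κ ≫ dd = 0 := by
    rw [hκ, hdd, biprod.lift_desc, Preadditive.neg_comp, haι, add_neg_cancel]
  haveI hκmono : Mono κ := by
    refine (Preadditive.mono_iff_cancel_zero _).2 (fun T t ht => ?_)
    have := ht =≫ biprod.fst
    simp only [hκ, Category.assoc, biprod.lift_fst, zero_comp] at this
    exact zero_of_comp_mono u this
  have hexist : ∀ {T : C} (t : T ⟶ X ⊞ kernel ρ), t ≫ dd = 0 → ∃ w : T ⟶ A, w ≫ κ = t := by
    intro T t ht
    have htot : t ≫ dd = (t ≫ biprod.fst) ≫ j + (t ≫ biprod.snd) ≫ kernel.ι ρ := by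
      rw [hdd, biprod.desc_eq, Preadditive.comp_add]
      simp only [Category.assoc]
    have hsum : (t ≫ biprod.fst) ≫ j + (t ≫ biprod.snd) ≫ kernel.ι ρ = 0 := by
      rw [← htot, ht]
    have hneg : (t ≫ biprod.fst) ≫ j = -((t ≫ biprod.snd) ≫ kernel.ι ρ) := by
      rw [← add_eq_zero_iff_eq_neg]; exact hsum
    have hπ0 : (t ≫ biprod.fst) ≫ π = 0 := by
      rw [← hjρ, ← Category.assoc, hneg]
      simp
    obtain ⟨w, hw⟩ := se_lift hse1 (t ≫ biprod.fst) hπ0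
    have hk2 : -(w ≫ a) = t ≫ biprod.snd := by
      rw [← cancel_mono (kernel.ι ρ)]
      have e1 : (-(w ≫ a)) ≫ kernel.ι ρ = -((t ≫ biprod.fst) ≫ j) := by
        rw [Preadditive.neg_comp, Category.assoc w a (kernel.ι ρ), haι,
          ← Category.assoc, hw]
      rw [e1, hneg, neg_neg]
    refine ⟨w, ?_⟩
    apply biprod.hom_ext
    · simpa [hκ] using hw
    · simpa [hκ] using hk2
  have hκker : IsLimit (KernelFork.ofι κ hκd) :=
    KernelFork.IsLimit.ofι' κ hκd
      (fun t ht => ⟨(hexist t ht).choose, (hexist t ht).choose_spec⟩)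
  have hddcoker := Abelian.epiIsCokernelOfKernel (KernelFork.ofι κ hκd) hκker
  set m : X ⊞ kernel ρ ⟶ X := biprod.desc (𝟙 X) ψ with hm
  have hκm : κ ≫ m = 0 := by
    rw [hκ, hm, biprod.lift_desc, Category.comp_id, Preadditive.neg_comp, hψ, add_neg_cancel]
  obtain ⟨r, hr⟩ := CokernelCofork.IsColimit.desc' hddcoker m hκm
  refine ⟨r, ?_⟩
  have := biprod.inl ≫= hr
  simpa [hdd, hm] using this

/-- The chosen categorical coproduct is a coproduct in the sense of `IsCoproductIn`. -/
lemma isCoproductIn_sigma [HasCoproducts.{v} C] {I : Type v} (f : I → C) :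
    IsCoproductIn Set.univ f (∐ f) (fun i => Sigma.ι f i) := by
  refine ⟨fun _ => trivial, trivial, fun Z _ g => ?_⟩
  exact ⟨Sigma.desc g, fun i => Sigma.ι_desc g i, fun h hh => Sigma.hom_ext _ _ (by simpa using hh)⟩

/-- The split short exact sequence `0 → A → A ⊞ V → V → 0`. -/
lemma se_split (A V : C) : IsShortExact (biprod.inl : A ⟶ A ⊞ V) biprod.snd := by
  refine se_mk biprod.inl_snd inferInstance inferInstance (fun {T} g hg => ?_)
  refine ⟨g ≫ biprod.fst, ?_⟩
  apply biprod.hom_ext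
  · simp
  · simpa using hg.symm

/-- Yoneda equivalence of extensions is an equivalence relation. -/
lemma extRel_equivalence (X Y : C) : Equivalence (extRel X Y) := by
  constructor
  · rintro ⟨E, i, p, hse⟩
    exact ⟨𝟙 E, by simp, by simp⟩
  · rintro ⟨E₁, i₁, p₁, hse₁⟩ ⟨E₂, i₂, p₂, hse₂⟩ ⟨φ, h1, h2⟩
    let hmor : (ShortComplex.mk i₁ p₁ (se_w hse₁)) ⟶ (ShortComplex.mk i₂ p₂ (se_w hse₂)) :=
      { τ₁ := 𝟙 Y, τ₂ := φ, τ₃ := 𝟙 X,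
        comm₁₂ := by simpa using h1.symm, comm₂₃ := by simpa using h2 }
    haveI : IsIso hmor.τ₁ := inferInstanceAs (IsIso (𝟙 Y))
    haveI : IsIso hmor.τ₃ := inferInstanceAs (IsIso (𝟙 X))
    haveI hi2 : IsIso hmor.τ₂ :=
      ShortComplex.isIso₂_of_shortExact_of_isIso₁₃ hmor (se_shortExact hse₁) (se_shortExact hse₂)
    haveI : IsIso φ := hi2
    refine ⟨inv φ, ?_, ?_⟩
    · rw [← h1, Category.assoc, IsIso.hom_inv_id, Category.comp_id]
    · rw [← h2, ← Category.assoc, IsIso.inv_hom_id, Category.id_comp]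
  · rintro ⟨E₁, i₁, p₁, hse₁⟩ ⟨E₂, i₂, p₂, hse₂⟩ ⟨E₃, i₃, p₃, hse₃⟩ ⟨φ, h1, h2⟩ ⟨φ', h1', h2'⟩
    exact ⟨φ ≫ φ', by rw [← Category.assoc, h1, h1'], by rw [Category.assoc, h2', h2]⟩

lemma extRel_of_quot_eq {X Y : C} {e₁ e₂ : ExtElem X Y}
    (h : (Quot.mk (extRel X Y) e₁ : ExtClass X Y) = Quot.mk (extRel X Y) e₂) :
    extRel X Y e₁ e₂ := by
  rw [Quot.eq] at h
  induction h with
  | rel _ _ h => exact h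
  | refl _ => exact (extRel_equivalence X Y).refl _
  | symm _ _ _ ih => exact (extRel_equivalence X Y).symm ih
  | trans _ _ _ _ _ ih₁ ih₂ => exact (extRel_equivalence X Y).trans ih₁ ih₂

/-- A monomorphism into an `Ext¹(V,-)`-trivial object gives: `Ext¹(V,A)` is a small set. -/
lemma small_extClass_of_mono {V A T : C} (hT : Ext1Zero V T) {m : A ⟶ T} (hm : Mono m) :
    Small.{v} (ExtClass V A) := by
  have hseT : IsShortExact m (cokernel.π m) := by
    refine se_mk' (cokernel.condition m) hm inferInstance (fun {T'} g hg => ?_)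
    exact ⟨cokernel.desc m g hg, cokernel.π_desc m g hg⟩
  choose W inA prT prV h1 h2 h3 h4 h5 h6 using
    fun γ : V ⟶ cokernel m => pullback_ses hseT γ
  refine small_of_surjective (f := fun γ : V ⟶ cokernel m =>
    (Quot.mk (extRel V A) ⟨W γ, inA γ, prV γ, h4 γ⟩ : ExtClass V A)) ?_
  intro x
  obtain ⟨⟨E, i, q, hseE⟩, hx⟩ := Quot.exists_rep x
  obtain ⟨s, hs⟩ := ext_lift_of_ext1zero hT hseE m
  have h0 : i ≫ s ≫ cokernel.π m = 0 := by
    rw [← Category.assoc, hs, cokernel.condition]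
  obtain ⟨γ, hγ⟩ := se_desc hseE (s ≫ cokernel.π m) h0
  obtain ⟨ψ, hψ1, hψ2⟩ := h5 γ s q hγ.symm
  refine ⟨γ, ?_⟩
  rw [← hx]
  apply Quot.sound
  apply (extRel_equivalence V A).symm
  refine ⟨ψ, h6 γ _ _ ?_ ?_, hψ2⟩
  · rw [Category.assoc, hψ1, hs, h1]
  · rw [Category.assoc, hψ2, h2, se_w hseE]

/-- Universal extensions from a generating family of maps `V ⟶ P`. -/
lemma universal_of_generating {V A T P Q : C} (hT : Ext1Zero V T)
    {m : A ⟶ T} {e : T ⟶ P} (hseT : IsShortExact m e) (g : Q ⟶ P)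
    (hgen : ∀ γ : V ⟶ P, ∃ vm : V ⟶ Q, vm ≫ g = γ) :
    ∃ (X : C) (u : A ⟶ X) (pq : X ⟶ Q), IsShortExact u pq ∧
      ∀ (E : C) (i : A ⟶ E) (q : E ⟶ V), IsShortExact i q → ∃ ψ : E ⟶ X, i ≫ ψ = u := by
  obtain ⟨W, inA, prT, prQ, h1, h2, h3, h4, h5, h6⟩ := pullback_ses hseT g
  refine ⟨W, inA, prQ, h4, fun E i q hseE => ?_⟩
  obtain ⟨s, hs⟩ := ext_lift_of_ext1zero hT hseE m
  have h0 : i ≫ s ≫ e = 0 := by rw [← Category.assoc, hs, se_w hseT]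
  obtain ⟨γ, hγ⟩ := se_desc hseE (s ≫ e) h0
  obtain ⟨vm, hvm⟩ := hgen γ
  obtain ⟨ψ, hψ1, hψ2⟩ := h5 s (q ≫ vm) (by rw [← hγ, Category.assoc, hvm])
  refine ⟨ψ, h6 _ _ ?_ ?_⟩
  · rw [Category.assoc, hψ1, hs, h1]
  · rw [Category.assoc, hψ2, h2, ← Category.assoc, se_w hseE, zero_comp]

/-- A cogenerating right perpendicular class implies `∐¹ V = 0`. -/
lemma coprodDerivedZero_of_cogen {V : C}
    (hcog : CogeneratingIn Set.univ (rightPerp Set.univ V)) (I : Type v) :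
    CoprodDerivedZero I V := by
  intro X Y u p hse QX QY ιX ιY uu hQX hQY hcompat
  refine (Preadditive.mono_iff_cancel_zero _).2 (fun Z g hg => ?_)
  obtain ⟨T₀, hT₀, mq, hmq⟩ := hcog QX trivial
  have hfac : ∀ (T : C), Ext1Zero V T → ∀ t : QX ⟶ T, ∃ s : QY ⟶ T, uu ≫ s = t := by
    intro T hT t
    have hsi : ∀ i, ∃ si : Y i ⟶ T, u i ≫ si = ιX i ≫ t := fun i =>
      ext_lift_of_ext1zero hT (hse i) (ιX i ≫ t)
    choose si hsi using hsi
    obtain ⟨s, hs, -⟩ := hQY.desc T trivial si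
    refine ⟨s, ?_⟩
    obtain ⟨w, -, huniq⟩ := hQX.desc T trivial (fun i => ιX i ≫ t)
    rw [huniq (uu ≫ s) ?_, huniq t (fun i => rfl)]
    intro i
    rw [← Category.assoc, hcompat i, Category.assoc, hs i, hsi i]
  obtain ⟨s, hs⟩ := hfac T₀ hT₀.2 mq
  have h0 : g ≫ mq = 0 := by rw [← hs, ← Category.assoc, hg, zero_comp]
  haveI := hmq
  exact zero_of_comp_mono mq h0

/-- Construction of a universal extension from smallness of `Ext¹(V,A)` and `∐¹ V = 0`. -/
lemma universal_extension_of_small [HasCoproducts.{v} C] {V : C} (A : C)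
    (hsmall : Small.{v} (ExtClass V A)) (hcd : ∀ I : Type v, CoprodDerivedZero I V) :
    ∃ (X : C) (u : A ⟶ X), IsUniversalExtensionIn Set.univ V A X u := by
  haveI := hsmall
  set S := Shrink.{v} (ExtClass V A) with hS
  haveI : Nonempty (ExtClass V A) :=
    ⟨Quot.mk _ ⟨A ⊞ V, biprod.inl, biprod.snd, se_split A V⟩⟩
  haveI hSne : Nonempty S := ⟨equivShrink (ExtClass V A) (Classical.arbitrary _)⟩
  have hrep : ∀ s : S, ∃ e : ExtElem V A,
      Quot.mk (extRel V A) e = (equivShrink (ExtClass V A)).symm s :=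
    fun s => Quot.exists_rep _
  choose rep hrep using hrep
  set Ee : S → C := fun s => (rep s).1 with hEe
  set ie : ∀ s, A ⟶ Ee s := fun s => (rep s).2.1 with hie
  set qe : ∀ s, Ee s ⟶ V := fun s => (rep s).2.2.1 with hqe
  have hsee : ∀ s, IsShortExact (ie s) (qe s) := fun s => (rep s).2.2.2
  set ii : (∐ fun _ : S => A) ⟶ ∐ Ee := Sigma.desc (fun s => ie s ≫ Sigma.ι Ee s) with hii
  set qq : (∐ Ee) ⟶ ∐ (fun _ : S => V) :=
    Sigma.desc (fun s => qe s ≫ Sigma.ι (fun _ : S => V) s) with hqq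
  haveI hiim : Mono ii := by
    refine hcd S (fun _ => A) Ee ie qe hsee _ _ _ _ ii
      (isCoproductIn_sigma _) (isCoproductIn_sigma _) (fun s => ?_)
    simp [hii]
  haveI hqqe : Epi qq := (Preadditive.epi_iff_cancel_zero _).2 (by
    intro T t ht
    apply Sigma.hom_ext
    intro s
    haveI := se_epi (hsee s)
    have h1 : qe s ≫ Sigma.ι (fun _ : S => V) s ≫ t = 0 := by
      have := Sigma.ι Ee s ≫= ht
      simpa [hqq] using this
    have h2 := zero_of_epi_comp (qe s) h1
    rw [h2, comp_zero])
  have hw : ii ≫ qq = 0 := by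
    apply Sigma.hom_ext
    intro s
    rw [comp_zero, ← Category.assoc, hii, Sigma.ι_desc, Category.assoc, hqq, Sigma.ι_desc,
      ← Category.assoc, se_w (hsee s), zero_comp]
  have hco : ∀ {T : C} (t : (∐ Ee) ⟶ T), ii ≫ t = 0 → ∃ d, qq ≫ d = t := by
    intro T t ht
    have h1 : ∀ s, ie s ≫ Sigma.ι Ee s ≫ t = 0 := by
      intro s
      have := Sigma.ι (fun _ : S => A) s ≫= ht
      simpa [hii] using this
    have h2 : ∀ s, ∃ ds : V ⟶ T, qe s ≫ ds = Sigma.ι Ee s ≫ t := fun s =>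
      se_desc (hsee s) _ (h1 s)
    choose ds hds using h2
    refine ⟨Sigma.desc ds, ?_⟩
    apply Sigma.hom_ext
    intro s
    simp [hqq, hds s]
  have hseQ : IsShortExact ii qq := se_mk' hw hiim hqqe hco
  obtain ⟨X, u, c, pp, hcomm, hcp, hseX, -⟩ :=
    pushout_ses hseQ (Sigma.desc (fun _ : S => 𝟙 A))
  refine ⟨X, u, trivial, trivial,
    ⟨S, hSne, ∐ (fun _ : S => V), fun s : S => Sigma.ι (fun _ : S => V) s, pp,
      isCoproductIn_sigma (fun _ : S => V), hseX⟩, ?_⟩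
  intro E _ i q hseE
  set s₀ := equivShrink (ExtClass V A) (Quot.mk (extRel V A) ⟨E, i, q, hseE⟩) with hs₀
  have heq : Quot.mk (extRel V A) (rep s₀) = Quot.mk (extRel V A) ⟨E, i, q, hseE⟩ :=
    (hrep s₀).trans (Equiv.symm_apply_apply _ _)
  have hrel := (extRel_equivalence V A).symm (extRel_of_quot_eq heq)
  obtain ⟨φ, hφ1, hφ2⟩ := hrel
  refine ⟨φ ≫ Sigma.ι Ee s₀ ≫ c, ?_⟩
  have e1 : i ≫ φ = ie s₀ := hφ1
  rw [← Category.assoc, e1]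
  have e2 : Sigma.ι (fun _ : S => A) s₀ ≫ ii = ie s₀ ≫ Sigma.ι Ee s₀ := by
    rw [hii, Sigma.ι_desc]
  rw [← Category.assoc, ← e2, Category.assoc, hcomm, ← Category.assoc, Sigma.ι_desc,
    Category.id_comp]

/-- Finite biproducts of copies of `V` are coproducts in the sense of `IsCoproductIn`. -/
lemma isCoproductIn_biproduct (ι : Type) [Fintype ι] (V : C) :
    IsCoproductIn Set.univ (fun _ : ULift.{v} ι => V) (⨁ fun _ : ι => V)
      (fun j => biproduct.ι (fun _ : ι => V) j.down) := by
  refine ⟨fun _ => trivial, trivial, fun Z _ g => ?_⟩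
  refine ⟨biproduct.desc (fun k => g ⟨k⟩), fun j => biproduct.ι_desc _ j.down, fun h hh => ?_⟩
  apply biproduct.hom_ext'
  intro k
  rw [biproduct.ι_desc]
  exact hh ⟨k⟩

theorem statement14 (V : C)
    -- `Ext¹(V, V^{(I)}) = 0` for all sets `I` for which the coproduct exists:
    (hV : ∀ (I : Type v) (Q : C) (ι : ∀ _ : I, V ⟶ Q),
      IsCoproductIn Set.univ (fun _ : I => V) Q ι → Ext1Zero V Q) :
    -- (1) if `𝒜` is `Hom`-finite:
    (HomFinite C →
      (IsExt1UniversalIn Set.univ V ↔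
        CogeneratingIn Set.univ (rightPerp Set.univ V))) ∧
    -- (2) if `𝒜` is (Ab.3):
    (HasCoproducts.{v} C →
      ((((∀ A : C, Small.{v} (ExtClass V A)) ∧ (∀ I : Type v, CoprodDerivedZero I V)) ↔
          CogeneratingIn Set.univ (rightPerp Set.univ V)) ∧
       (CogeneratingIn Set.univ (rightPerp Set.univ V) →
          IsExt1UniversalIn Set.univ V))) := by
  have perp_of_ue : ∀ {A X : C} {u : A ⟶ X}, IsUniversalExtensionIn Set.univ V A X u →
      Ext1Zero V X ∧ Mono u := by
    rintro A X u ⟨-, -, ⟨J, hne, P, κ, p, hcop, hsep⟩, hext⟩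
    exact ⟨ext1zero_of_universal hsep (hV J P κ hcop) (fun E i q hq => hext E trivial i q hq),
      se_mono hsep⟩
  have univ_to_cogen : IsExt1UniversalIn Set.univ V →
      CogeneratingIn Set.univ (rightPerp Set.univ V) := by
    intro hu A _
    obtain ⟨X, u, hue⟩ := hu A trivial
    obtain ⟨hX, hm⟩ := perp_of_ue hue
    exact ⟨X, ⟨trivial, hX⟩, u, hm⟩
  have cogen_data : CogeneratingIn Set.univ (rightPerp Set.univ V) → ∀ A : C,
      ∃ (T P : C) (m : A ⟶ T) (e : T ⟶ P), Ext1Zero V T ∧ Mono m ∧ IsShortExact m e := by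
    intro hcog A
    obtain ⟨T, hT, m, hm⟩ := hcog A trivial
    haveI := hm
    refine ⟨T, cokernel m, m, cokernel.π m, hT.2, hm, ?_⟩
    exact se_mk' (cokernel.condition m) hm inferInstance
      (fun g hg => ⟨cokernel.desc m g hg, cokernel.π_desc m g hg⟩)
  refine ⟨?_, ?_⟩
  · -- (1) Hom-finite case
    intro hfin
    refine ⟨univ_to_cogen, ?_⟩
    intro hcog A _
    obtain ⟨hfs⟩ := hfin
    letI := hfs.commRing
    letI := hfs.linear
    obtain ⟨T, P, m, e, hT, hm, hseT⟩ := cogen_data hcog A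
    haveI : Module.Finite hfs.R (V ⟶ P) := hfs.homFinite V P
    obtain ⟨n, sgen, hspan⟩ := Module.Finite.exists_fin (R := hfs.R) (M := V ⟶ P)
    have hgen : ∀ γ : V ⟶ P, ∃ vm : V ⟶ ⨁ (fun _ : Fin n ⊕ PUnit => V),
        vm ≫ biproduct.desc (Sum.elim sgen (fun _ => 0)) = γ := by
      intro γ
      have hγ : γ ∈ Submodule.span hfs.R (Set.range sgen) := hspan ▸ Submodule.mem_top
      rw [Submodule.mem_span_range_iff_exists_fun] at hγ
      obtain ⟨cc, hcc⟩ := hγ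
      refine ⟨biproduct.lift (Sum.elim (fun i => cc i • 𝟙 V) (fun _ => 0)), ?_⟩
      rw [biproduct.lift_desc, Fintype.sum_sum_type]
      simp only [Sum.elim_inl, Sum.elim_inr, Linear.smul_comp, Category.id_comp, zero_comp,
        Finset.sum_const_zero, add_zero]
      exact hcc
    obtain ⟨X, u, pq, hseX, hext⟩ :=
      universal_of_generating hT hseT (biproduct.desc (Sum.elim sgen (fun _ => 0))) hgen
    exact ⟨X, u, trivial, trivial,
      ⟨ULift.{v} (Fin n ⊕ PUnit), ⟨⟨Sum.inr PUnit.unit⟩⟩, ⨁ (fun _ : Fin n ⊕ PUnit => V),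
        fun j => biproduct.ι (fun _ : Fin n ⊕ PUnit => V) j.down, pq,
        isCoproductIn_biproduct (Fin n ⊕ PUnit) V, hseX⟩,
      fun E _ i q hq => hext E i q hq⟩
  · -- (2) (Ab.3) case
    intro hco
    haveI := hco
    have cogen_to_univ : CogeneratingIn Set.univ (rightPerp Set.univ V) →
        IsExt1UniversalIn Set.univ V := by
      intro hcog A _
      obtain ⟨T, P, m, e, hT, hm, hseT⟩ := cogen_data hcog A
      have hgen : ∀ γ : V ⟶ P, ∃ vm : V ⟶ ∐ (fun _ : (V ⟶ P) => V),
          vm ≫ Sigma.desc (fun γ' : V ⟶ P => γ') = γ := fun γ =>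
        ⟨Sigma.ι (fun _ : (V ⟶ P) => V) γ, Sigma.ι_desc _ γ⟩
      obtain ⟨X, u, pq, hseX, hext⟩ :=
        universal_of_generating hT hseT (Sigma.desc (fun γ' : V ⟶ P => γ')) hgen
      exact ⟨X, u, trivial, trivial,
        ⟨(V ⟶ P), ⟨0⟩, ∐ (fun _ : (V ⟶ P) => V),
          fun γ => Sigma.ι (fun _ : (V ⟶ P) => V) γ, pq,
          isCoproductIn_sigma (fun _ : (V ⟶ P) => V), hseX⟩,
        fun E _ i q hq => hext E i q hq⟩
    refine ⟨⟨?_, ?_⟩, cogen_to_univ⟩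
    · rintro ⟨hsm, hcd⟩ A _
      obtain ⟨X, u, hue⟩ := universal_extension_of_small A (hsm A) hcd
      obtain ⟨hX, hm⟩ := perp_of_ue hue
      exact ⟨X, ⟨trivial, hX⟩, u, hm⟩
    · intro hcog
      refine ⟨fun A => ?_, fun I => coprodDerivedZero_of_cogen hcog I⟩
      obtain ⟨T, hT, m, hm⟩ := hcog A trivial
      exact small_extClass_of_mono hT.2 hm

end Stmt14
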